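/- Stirling-type lower bound: for every positive natural number n, n! ≥ n^n e^{−n} √(2πn). -/

import Mathlib

/-- Stirling-type lower bound: n! ≥ nⁿ e^(−n) √(2πn) for n ≥ 1. -/
theorem stmt7 (n : ℕ) (hn : 1 ≤ n) :
    (n : ℝ) ^ n * Real.exp (-(n : ℝ)) * Real.sqrt (2 * Real.pi * n)
      ≤ (Nat.factorial n : ℝ) := by
  have key : Real.sqrt Real.pi ≤ Stirling.stirlingSeq n := by
    have h1 : Antitone (Stirling.stirlingSeq ∘ Nat.succ) := Stirling.stirlingSeq'_antitone
    have h2 : Filter.Tendsto (Stirling.stirlingSeq ∘ Nat.succ) Filter.atTop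
        (nhds (Real.sqrt Real.pi)) := by
      rw [show Stirling.stirlingSeq ∘ Nat.succ = fun k => Stirling.stirlingSeq (k + 1) from rfl,
        Filter.tendsto_add_atTop_iff_nat 1]
      exact Stirling.tendsto_stirlingSeq_sqrt_pi
    obtain ⟨m, rfl⟩ := Nat.exists_eq_add_of_le hn
    have := h1.le_of_tendsto h2 m
    simpa [Nat.add_comm] using this
  rw [Stirling.stirlingSeq] at key
  have hnpos : (0 : ℝ) < n := by exact_mod_cast hn
  have hd : (0 : ℝ) < Real.sqrt (2 * n) * ((n : ℝ) / Real.exp 1) ^ n := by positivity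
  rw [le_div_iff₀ hd] at key
  calc (n : ℝ) ^ n * Real.exp (-(n : ℝ)) * Real.sqrt (2 * Real.pi * n)
      = Real.sqrt Real.pi * (Real.sqrt (2 * n) * ((n : ℝ) / Real.exp 1) ^ n) := by
        rw [show (2 : ℝ) * Real.pi * n = Real.pi * (2 * n) by ring,
          Real.sqrt_mul Real.pi_pos.le, div_pow, Real.exp_neg, ← Real.exp_nat_mul,
          Real.exp_nat_mul]
        field_simp
        ring_nf
        rw [← Real.exp_nat_mul, mul_one]
    _ ≤ (Nat.factorial n : ℝ) := key
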